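/- Let λ be a k-strict partition and μ a k-strict partition such that λ → μ (the Pieri relation). Then for any t ≥ ℓ(λ), the set C_t(λ) = {(i,j) : 1 ≤ i ≤ j ≤ t, λ_i + λ_j > 2k + j - i} is contained in C_{t+1}(μ), which in turn is contained in C_t(λ) ∪ ∂C_t(λ). -/

import Mathlib

/-- `b` is a box of the Young diagram of `ν` (rows and columns indexed from `1`). -/
def IsBoxOf (ν : ℕ → ℕ) (b : ℕ × ℕ) : Prop := 1 ≤ b.1 ∧ 1 ≤ b.2 ∧ b.2 ≤ ν b.1

/-- `b` is a box of `μ ∖ λ`. -/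
def SkewBox (lam mu : ℕ → ℕ) (b : ℕ × ℕ) : Prop := IsBoxOf mu b ∧ ¬ IsBoxOf lam b

/-- The boxes `[r,c]` and `[r',c']` are `k`-related: `|c-k-1| + r = |c'-k-1| + r'`. -/
def KRel (k : ℕ) (b b' : ℕ × ℕ) : Prop :=
  |(b.2 : ℤ) - k - 1| + b.1 = |(b'.2 : ℤ) - k - 1| + b'.1

/-- The number of boxes in column `c` of `ν` (rows cut off at the bound `B`). -/
def colLen (ν : ℕ → ℕ) (B c : ℕ) : ℕ := ((Finset.Icc 1 B).filter fun i => c ≤ ν i).card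

/-- The Pieri relation `λ → μ` of Buch–Kresch–Tamvakis for `k`-strict partitions:
`λ_j − 1 ≤ μ_j ≤ λ_{j−1}`, `λ_j ≤ μ_j` when `λ_j > k`, together with the
`k`-relatedness conditions (1) and (2). -/
def PieriRel (k B : ℕ) (lam mu : ℕ → ℕ) : Prop :=
  (∀ j, 1 ≤ j → lam j ≤ mu j + 1) ∧
  (∀ j, 2 ≤ j → mu j ≤ lam (j - 1)) ∧
  (∀ j, 1 ≤ j → k < lam j → lam j ≤ mu j) ∧
  -- condition (1): if one of the first `k` columns of `μ` has the same number of boxes as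
  -- the same column of `λ`, then the bottom box of this column is `k`-related to at most
  -- one box of `μ ∖ λ`.
  (∀ c, 1 ≤ c → c ≤ k → colLen mu B c = colLen lam B c → 1 ≤ colLen lam B c →
    ∀ b b' : ℕ × ℕ, SkewBox lam mu b → KRel k (colLen lam B c, c) b →
      SkewBox lam mu b' → KRel k (colLen lam B c, c) b' → b = b') ∧
  -- condition (2): if a column of `μ` has fewer boxes than the same column of `λ`, then
  -- the removed boxes and the bottom box of `μ` in this column must each be `k`-related to
  -- exactly one box of `μ ∖ λ`, and these boxes of `μ ∖ λ` must all lie in the same row.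
  (∀ c, 1 ≤ c → colLen mu B c < colLen lam B c →
    ∃ r0 : ℕ,
      (∀ i, colLen mu B c < i → i ≤ colLen lam B c →
        (∃! b : ℕ × ℕ, SkewBox lam mu b ∧ KRel k (i, c) b) ∧
        (∀ b : ℕ × ℕ, SkewBox lam mu b → KRel k (i, c) b → b.1 = r0)) ∧
      (1 ≤ colLen mu B c →
        (∃! b : ℕ × ℕ, SkewBox lam mu b ∧ KRel k (colLen mu B c, c) b) ∧
        (∀ b : ℕ × ℕ, SkewBox lam mu b → KRel k (colLen mu B c, c) b → b.1 = r0)))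

/-- `C_t(λ) = {(i,j) : 1 ≤ i ≤ j ≤ t and λ_i + λ_j > 2k + j − i}`. -/
def Cset (k : ℕ) (lam : ℕ → ℕ) (t : ℕ) : Set (ℕ × ℕ) :=
  {p | 1 ≤ p.1 ∧ p.1 ≤ p.2 ∧ p.2 ≤ t ∧ 2 * k + p.2 < lam p.1 + lam p.2 + p.1}

/-- The outside rim `∂D` of `D ⊆ Δ`: pairs `(i,j) ∈ Δ ∖ D` with `i = 1` or `(i−1,j−1) ∈ D`. -/
def OutsideRim (D : Set (ℕ × ℕ)) : Set (ℕ × ℕ) :=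
  {p | 1 ≤ p.1 ∧ p.1 ≤ p.2 ∧ p ∉ D ∧ (p.1 = 1 ∨ (p.1 - 1, p.2 - 1) ∈ D)}


lemma strictDec {k : ℕ} {lam : ℕ → ℕ}
    (hanti : ∀ i j, 1 ≤ i → i ≤ j → lam j ≤ lam i)
    (hstrict : ∀ j, 1 ≤ j → k < lam j → lam (j + 1) < lam j)
    (a b : ℕ) (ha : 1 ≤ a) (hab : a ≤ b) :
    k < lam b → lam b + (b - a) ≤ lam a := by
  induction b, hab using Nat.le_induction with
  | base => intro _; omega
  | succ n hn ih =>
    intro hk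
    have h1 : 1 ≤ n := le_trans ha hn
    have hkn : k < lam n := lt_of_lt_of_le hk (hanti n (n + 1) h1 (by omega))
    have h2 := ih hkn
    have h3 := hstrict n h1 hkn
    omega

lemma colLen_ge {ν : ℕ → ℕ} {B c s : ℕ}
    (hanti : ∀ i j, 1 ≤ i → i ≤ j → ν j ≤ ν i)
    (h1 : 1 ≤ s) (hB : s ≤ B) (hc : c ≤ ν s) : s ≤ colLen ν B c := by
  have hsub : Finset.Icc 1 s ⊆ (Finset.Icc 1 B).filter fun i => c ≤ ν i := by
    intro x hx
    rw [Finset.mem_Icc] at hx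
    rw [Finset.mem_filter, Finset.mem_Icc]
    exact ⟨⟨hx.1, hx.2.trans hB⟩, hc.trans (hanti x s hx.1 hx.2)⟩
  have h2 := Finset.card_le_card hsub
  rw [Nat.card_Icc] at h2
  unfold colLen
  omega

lemma colLen_last {ν : ℕ → ℕ} {B c : ℕ}
    (hanti : ∀ i j, 1 ≤ i → i ≤ j → ν j ≤ ν i)
    (h1 : 1 ≤ colLen ν B c) : c ≤ ν (colLen ν B c) := by
  by_contra h
  push_neg at h
  have hsub : (Finset.Icc 1 B).filter (fun i => c ≤ ν i) ⊆ Finset.Icc 1 (colLen ν B c - 1) := by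
    intro x hx
    rw [Finset.mem_filter, Finset.mem_Icc] at hx
    rw [Finset.mem_Icc]
    refine ⟨hx.1.1, ?_⟩
    by_contra hx2
    push_neg at hx2
    have : ν x ≤ ν (colLen ν B c) := hanti (colLen ν B c) x h1 (by omega)
    omega
  have h2 := Finset.card_le_card hsub
  rw [Nat.card_Icc] at h2
  have h3 : ((Finset.Icc 1 B).filter (fun i => c ≤ ν i)).card = colLen ν B c := rfl
  omega

lemma krel_iff (k r c r' c' : ℕ) :
    KRel k (r, c) (r', c') ↔ |(c : ℤ) - k - 1| + r = |(c' : ℤ) - k - 1| + r' := Iff.rfl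


/-- if `λ` and `μ` are `k`-strict partitions with `λ → μ`, then for any
`t ≥ ℓ(λ)` we have `C_t(λ) ⊆ C_{t+1}(μ) ⊆ C_t(λ) ∪ ∂C_t(λ)`. -/
theorem stmt_9 (k B t : ℕ) (lam mu : ℕ → ℕ)
    (hlam_anti : ∀ i j, 1 ≤ i → i ≤ j → lam j ≤ lam i)
    (hmu_anti : ∀ i j, 1 ≤ i → i ≤ j → mu j ≤ mu i)
    (hlam_strict : ∀ j, 1 ≤ j → k < lam j → lam (j + 1) < lam j)
    (hmu_strict : ∀ j, 1 ≤ j → k < mu j → mu (j + 1) < mu j)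
    (hlamB : ∀ i, B < i → lam i = 0) (hmuB : ∀ i, B < i → mu i = 0)
    (ht : ∀ i, t < i → lam i = 0)
    (hP : PieriRel k B lam mu) :
    Cset k lam t ⊆ Cset k mu (t + 1) ∧
      Cset k mu (t + 1) ⊆ Cset k lam t ∪ OutsideRim (Cset k lam t) := by
  obtain ⟨hP1, hP2, hP3, hP4, hP5⟩ := hP
  constructor
  · rintro ⟨i, j⟩ hp
    simp only [Cset, Set.mem_setOf_eq] at hp ⊢
    obtain ⟨hi1, hij, hjt, hC⟩ := hp
    refine ⟨hi1, hij, by omega, ?_⟩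
    have hj1 : 1 ≤ j := le_trans hi1 hij
    have hlamij : lam j ≤ lam i := hlam_anti i j hi1 hij
    have hki : k < lam i := by omega
    have hmui : lam i ≤ mu i := hP3 i hi1 hki
    by_cases hmuj : lam j ≤ mu j
    · omega
    push_neg at hmuj
    have hmuj' : mu j + 1 = lam j := by have := hP1 j hj1; omega
    have hkj : lam j ≤ k := by
      by_contra h
      push_neg at h
      have := hP3 j hj1 h
      omega
    by_cases hE : 2 * k + j + 2 ≤ lam i + lam j + i
    · omega
    push_neg at hE
    have hEq : lam i + lam j + i = 2 * k + 1 + j := by omega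
    by_cases hmui' : lam i + 1 ≤ mu i
    · omega
    push_neg at hmui'
    have hmui2 : mu i = lam i := by omega
    exfalso
    set c := lam j with hc
    have hc1 : 1 ≤ c := by omega
    have hjB : j ≤ B := by
      by_contra h
      push_neg at h
      have := hlamB j h
      omega
    have hlj : j ≤ colLen lam B c := colLen_ge hlam_anti hj1 hjB (le_of_eq hc)
    have hmj : colLen mu B c < j := by
      by_contra h
      push_neg at h
      have h1 : 1 ≤ colLen mu B c := le_trans hj1 h
      have h2 := colLen_last hmu_anti h1
      have h3 := hmu_anti j (colLen mu B c) hj1 h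
      omega
    obtain ⟨r0, hAll, hBot⟩ := hP5 c hc1 (lt_of_lt_of_le hmj hlj)
    obtain ⟨hEU, hbR⟩ := hAll j hmj hlj
    obtain ⟨⟨r, c'⟩, ⟨hbS, hbK⟩, hbU⟩ := hEU
    obtain ⟨⟨hr1, hc'1, hc'mu⟩, hbn⟩ := hbS
    have hr1' : 1 ≤ r := hr1
    have hc'mu2 : c' ≤ mu r := hc'mu
    have hlamr : lam r < c' := by
      by_contra h
      push_neg at h
      exact hbn ⟨hr1, hc'1, h⟩
    have hKz : |(c : ℤ) - k - 1| + j = |(c' : ℤ) - k - 1| + r := (krel_iff k j c r c').mp hbK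
    rw [abs_of_nonpos (by omega : (c : ℤ) - k - 1 ≤ 0)] at hKz
    have hrow : r + c' = lam i + i + 1 ∧ k + 1 ≤ c' := by
      rcases abs_cases ((c' : ℤ) - k - 1) with ⟨h1, h2⟩ | ⟨h1, h2⟩ <;> rw [h1] at hKz
      · omega
      · exfalso
        rcases le_or_gt r j with h | h
        · have := hlam_anti r j hr1 h
          omega
        · have := hmu_anti j r hj1 h.le
          omega
    obtain ⟨hrow1, hrow2⟩ := hrow
    rcases lt_trichotomy r i with hri | hri | hri
    · -- r < i
      have hsd := strictDec hlam_anti hlam_strict r i hr1 hri.le hki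
      have hrB : r ≤ B := by
        by_contra h
        push_neg at h
        have := hmuB r h
        omega
      have hmr : r ≤ colLen mu B c := colLen_ge hmu_anti hr1 hrB (by omega)
      obtain ⟨⟨b'', hb'', _⟩, hBotR⟩ := hBot (by omega)
      have hr0 : r = r0 := hbR (r, c') ⟨⟨hr1, hc'1, hc'mu⟩, hbn⟩ hbK
      obtain ⟨r'', c''⟩ := b''
      obtain ⟨hS'', hK''⟩ := hb''
      have hr''0 : r'' = r0 := hBotR (r'', c'') hS'' hK''
      obtain ⟨⟨hr''1, hc''1, hc''mu⟩, hb''n⟩ := hS''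
      have hc''mu2 : c'' ≤ mu r'' := hc''mu
      have hlamr'' : lam r'' < c'' := by
        by_contra h
        push_neg at h
        exact hb''n ⟨hr''1, hc''1, h⟩
      have hrr : r'' = r := by omega
      have hlam_eq : lam r'' = lam r := by rw [hrr]
      have hKz2 : |(c : ℤ) - k - 1| + (colLen mu B c) = |(c'' : ℤ) - k - 1| + r'' :=
        (krel_iff k (colLen mu B c) c r'' c'').mp hK''
      rw [abs_of_nonpos (by omega : (c : ℤ) - k - 1 ≤ 0),
        abs_of_nonneg (by omega : (0 : ℤ) ≤ (c'' : ℤ) - k - 1)] at hKz2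
      omega
    · -- r = i
      subst hri
      omega
    · -- i < r
      have hr2 : 2 ≤ r := by omega
      have hmur_le := hP2 r hr2
      have hklr : k < lam (r - 1) := by omega
      have hsd := strictDec hlam_anti hlam_strict i (r - 1) hi1 (by omega) hklr
      have heq1 : lam (r - 1) = c' := by omega
      have heq2 : mu r = c' := by omega
      rcases eq_or_lt_of_le (show i ≤ r - 1 by omega) with h | h
      · have hmus := hmu_strict i hi1 (by omega : k < mu i)
        have hr : r = i + 1 := by omega
        rw [hr] at heq2
        omega
      · have h1r : 1 ≤ r - 1 := by omega
        have hmur1 : mu r ≤ mu (r - 1) := hmu_anti (r - 1) r h1r (by omega)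
        have hmus := hmu_strict (r - 1) h1r (by omega : k < mu (r - 1))
        rw [show r - 1 + 1 = r by omega] at hmus
        have hb2S : SkewBox lam mu (r - 1, c' + 1) :=
          ⟨⟨show 1 ≤ r - 1 from h1r, show 1 ≤ c' + 1 by omega,
            show c' + 1 ≤ mu (r - 1) by omega⟩, fun hbox => by
            have h3 : c' + 1 ≤ lam (r - 1) := hbox.2.2
            omega⟩
        have hb2K : KRel k (j, c) (r - 1, c' + 1) := by
          rw [krel_iff]
          rw [abs_of_nonpos (by omega : (c : ℤ) - k - 1 ≤ 0),
            abs_of_nonneg (by omega : (0 : ℤ) ≤ ((c' + 1 : ℕ) : ℤ) - k - 1)]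
          omega
        have heqb := hbU (r - 1, c' + 1) ⟨hb2S, hb2K⟩
        rw [Prod.mk.injEq] at heqb
        omega
  · rintro ⟨i, j⟩ hp
    by_cases hin : (i, j) ∈ Cset k lam t
    · exact Or.inl hin
    right
    simp only [Cset, Set.mem_setOf_eq] at hp
    obtain ⟨hi1, hij, hjt1, hC⟩ := hp
    simp only [OutsideRim, Cset, Set.mem_setOf_eq]
    refine ⟨hi1, hij, hin, ?_⟩
    rcases eq_or_lt_of_le hi1 with h | h
    · exact Or.inl h.symm
    right
    have hi2 : 2 ≤ i := h
    have hj2 : 2 ≤ j := le_trans hi2 hij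
    have h1 := hP2 i hi2
    have h2 := hP2 j hj2
    refine ⟨by omega, by omega, by omega, by omega⟩
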